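/- For any odd positive integers w1, w2, w3, any complex number y1, and any nonnegative integer n: Σ_{k+l+m=n} (n choose k,l,m) E_{k,χ}(w1 y1) T_l(w2 d − 1, χ) T_m(w3 d − 1, χ) w1^{l+m} w2^{k+m} w3^{k+l} = Σ_{k+l+m=n} (n choose k,l,m) E_{k,χ}(w2 y1) T_l(w3 d − 1, χ) T_m(w1 d − 1, χ) w2^{l+m} w3^{k+m} w1^{k+l} = Σ_{k+l+m=n} (n choose k,l,m) E_{k,χ}(w3 y1) T_l(w1 d − 1, χ) T_m(w2 d − 1, χ) w3^{l+m} w1^{k+m} w2^{k+l}. -/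

import Mathlib

open Finset

/-- The formal exponential power series `e^{ct} = Σ cⁿ tⁿ/n!` in `ℂ[[t]]`. -/
noncomputable def expPS (c : ℂ) : PowerSeries ℂ :=
  PowerSeries.mk fun n => c ^ n / n.factorial

/-- `Σ_{a=0}^{d-1} (-1)^a χ(a) e^{at}` as a formal power series. -/
noncomputable def altSum (χ : ℤ → ℂ) (d : ℕ) : PowerSeries ℂ :=
  ∑ a ∈ Finset.range d, ((-1 : ℂ) ^ a * χ (a : ℤ)) • expPS (a : ℂ)

/-- `E` is the family of generalized Euler polynomials attached to `χ` mod `d`: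
`(Σ_{n≥0} E_{n,χ}(x) tⁿ/n!) · (e^{dt}+1) = 2 e^{xt} · Σ_{a=0}^{d-1} (-1)^a χ(a) e^{at}`. -/
def IsGenEuler (d : ℕ) (χ : ℤ → ℂ) (E : ℕ → ℂ → ℂ) : Prop :=
  ∀ x : ℂ, (PowerSeries.mk fun n => E n x / n.factorial) * (expPS (d : ℂ) + 1)
    = (2 : PowerSeries ℂ) * expPS x * altSum χ d

/-- The alternating generalized power sum `T_k(n,χ) = Σ_{a=0}^{n} (-1)^a χ(a) a^k`
(with the convention `0^0 = 1`). -/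
noncomputable def altPowSum (χ : ℤ → ℂ) (k n : ℕ) : ℂ :=
  ∑ a ∈ Finset.range (n + 1), (-1 : ℂ) ^ a * χ (a : ℤ) * (a : ℂ) ^ k

/-- The multinomial coefficient `(k+l+m)! / (k! l! m!)`. -/
def multinom (k l m : ℕ) : ℕ :=
  (k + l + m).factorial / (k.factorial * l.factorial * m.factorial)

/- ### Auxiliary lemmas -/

lemma expPS_eq (c : ℂ) : expPS c = PowerSeries.rescale c (PowerSeries.exp ℂ) := by
  ext n
  simp [expPS, PowerSeries.coeff_rescale, PowerSeries.coeff_exp, div_eq_mul_inv]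

lemma expPS_mul (a b : ℂ) : expPS a * expPS b = expPS (a + b) := by
  rw [expPS_eq, expPS_eq, expPS_eq, PowerSeries.exp_mul_exp_eq_exp_add]

lemma expPS_zero : expPS 0 = 1 := by
  ext n
  rcases n with _ | n <;> simp [expPS, PowerSeries.coeff_one]

lemma rescale_expPS (c a : ℂ) : PowerSeries.rescale c (expPS a) = expPS (a * c) := by
  rw [expPS_eq, expPS_eq, PowerSeries.rescale_rescale]

lemma constantCoeff_expPS (c : ℂ) :
    PowerSeries.constantCoeff (expPS c) = 1 := by
  simp [expPS, ← PowerSeries.coeff_zero_eq_constantCoeff]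

lemma expPS_add_one_ne_zero (c : ℂ) : expPS c + 1 ≠ 0 := by
  intro h
  have h2 := congrArg (PowerSeries.constantCoeff) h
  rw [map_add, map_one, constantCoeff_expPS, map_zero] at h2
  norm_num at h2

lemma telescope (c : ℂ) : ∀ w : ℕ, Odd w →
    (∑ j ∈ range w, ((-1 : ℂ) ^ j) • expPS (j * c)) * (expPS c + 1)
      = expPS (w * c) + 1 := by
  intro w hw
  obtain ⟨m, rfl⟩ := hw
  induction m with
  | zero => simp [expPS_zero, ← expPS_mul, add_comm]
  | succ m ih =>
      have h1 : 2 * (m + 1) + 1 = (2 * m + 1) + 1 + 1 := by ring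
      have hs1 : (-1 : ℂ) ^ (2 * m + 1) = -1 := by
        simp [pow_succ, pow_mul]
      have hs2 : (-1 : ℂ) ^ (2 * m + 1 + 1) = 1 := by
        simp [pow_succ, pow_mul]
      have e1 : ((2 * m + 1 : ℕ) : ℂ) * c + c = ((2 * m + 1 + 1 : ℕ) : ℂ) * c := by
        push_cast; ring
      have e2 : ((2 * m + 1 + 1 : ℕ) : ℂ) * c + c = ((2 * (m + 1) + 1 : ℕ) : ℂ) * c := by
        push_cast; ring
      rw [h1, Finset.sum_range_succ, Finset.sum_range_succ, add_mul, add_mul, ih,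
        hs1, hs2, neg_smul, one_smul, one_smul, neg_mul, mul_add, mul_add,
        expPS_mul, mul_one, mul_one, e1, expPS_mul, e2]
      ring

lemma chi_per_mul {χ : ℤ → ℂ} {d : ℕ} (hper : ∀ a : ℤ, χ (a + d) = χ a)
    (r j : ℕ) : χ ((j * d + r : ℕ) : ℤ) = χ (r : ℤ) := by
  induction j with
  | zero => simp
  | succ j ih =>
      have : ((j + 1) * d + r : ℕ) = ((j * d + r : ℕ) : ℤ) + d := by push_cast; ring
      rw [this, hper, ih]

lemma altBig (χ : ℤ → ℂ) (d : ℕ) (hd : Odd d) (hd0 : 0 < d)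
    (hper : ∀ a : ℤ, χ (a + d) = χ a) (w : ℕ) :
    (∑ a ∈ range (w * d), ((-1 : ℂ) ^ a * χ (a : ℤ)) • expPS (a : ℂ))
      = altSum χ d * ∑ j ∈ range w, ((-1 : ℂ) ^ j) • expPS ((j : ℂ) * d) := by
  rw [altSum, Finset.sum_mul_sum, Finset.sum_sigma']
  apply Finset.sum_nbij' (i := fun a => ⟨a % d, a / d⟩)
    (j := fun p => p.1 + p.2 * d)
  · intro a ha
    simp only [Finset.mem_sigma, Finset.mem_range] at *
    exact ⟨Nat.mod_lt _ hd0, Nat.div_lt_iff_lt_mul hd0 |>.2 (by omega)⟩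
  · intro p hp
    simp only [Finset.mem_sigma, Finset.mem_range] at *
    obtain ⟨h1, h2⟩ := hp
    calc p.1 + p.2 * d < d + p.2 * d := by omega
      _ ≤ w * d := by nlinarith
  · intro a ha
    simp [Nat.mod_add_div']
  · intro p hp
    simp only [Finset.mem_sigma, Finset.mem_range] at hp
    obtain ⟨h1, h2⟩ := hp
    simp [Nat.add_mul_mod_self_right, Nat.mod_eq_of_lt h1,
      Nat.add_mul_div_right _ _ hd0, Nat.div_eq_of_lt h1]
  · intro a ha
    have hmd : a % d + a / d * d = a := Nat.mod_add_div' a d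
    have hx : χ (a : ℤ) = χ ((a % d : ℕ) : ℤ) := by
      conv_lhs => rw [show (a : ℤ) = (((a / d) * d + a % d : ℕ) : ℤ) from by
        exact_mod_cast congrArg (Nat.cast (R := ℤ)) (Nat.div_add_mod' a d).symm]
      exact chi_per_mul hper _ _
    have hsign : ((-1 : ℂ)) ^ (a % d) * (-1) ^ (a / d) = (-1) ^ a := by
      conv_rhs => rw [← hmd]
      rw [pow_add, mul_comm (a / d) d, pow_mul, hd.neg_one_pow]
    have harg : ((a % d : ℕ) : ℂ) + ((a / d : ℕ) : ℂ) * (d : ℂ) = (a : ℂ) := by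
      exact_mod_cast congrArg (Nat.cast (R := ℂ)) hmd
    rw [smul_mul_smul_comm, expPS_mul, harg, hx]
    congr 1
    rw [← hsign]; ring

/-- The EGF of the alternating generalized power sums. -/
noncomputable def Tser (χ : ℤ → ℂ) (N : ℕ) : PowerSeries ℂ :=
  PowerSeries.mk fun l => altPowSum χ l N / l.factorial

lemma Tser_eq (χ : ℤ → ℂ) (N : ℕ) :
    Tser χ N = ∑ a ∈ range (N + 1), ((-1 : ℂ) ^ a * χ (a : ℤ)) • expPS (a : ℂ) := by
  ext l
  simp [Tser, altPowSum, expPS, Finset.sum_div, mul_div_assoc]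

lemma Tkey (χ : ℤ → ℂ) (d : ℕ) (hd : Odd d) (hd0 : 0 < d)
    (hper : ∀ a : ℤ, χ (a + d) = χ a) (w : ℕ) (hw : Odd w) (hw0 : 0 < w) :
    Tser χ (w * d - 1) * (expPS (d : ℂ) + 1)
      = altSum χ d * (expPS ((w * d : ℕ) : ℂ) + 1) := by
  have h1 : w * d - 1 + 1 = w * d := Nat.succ_pred_eq_of_pos (Nat.mul_pos hw0 hd0)
  rw [Tser_eq, h1, altBig χ d hd hd0 hper w, mul_assoc, telescope _ w hw]
  congr 2
  push_cast; ring

/-- The EGF of the generalized Euler polynomials at `x`. -/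
noncomputable def Eser (E : ℕ → ℂ → ℂ) (x : ℂ) : PowerSeries ℂ :=
  PowerSeries.mk fun n => E n x / n.factorial

lemma rescale_Eser {d : ℕ} {χ : ℤ → ℂ} {E : ℕ → ℂ → ℂ} (hE : IsGenEuler d χ E)
    (x c : ℂ) :
    PowerSeries.rescale c (Eser E x) * (expPS ((d : ℂ) * c) + 1)
      = 2 * expPS (x * c) * PowerSeries.rescale c (altSum χ d) := by
  have h := congrArg (PowerSeries.rescale c) (hE x)
  simpa [map_mul, map_add, map_ofNat, rescale_expPS, Eser] using h

lemma rescale_Tkey {d : ℕ} {χ : ℤ → ℂ} (hd : Odd d) (hd0 : 0 < d)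
    (hper : ∀ a : ℤ, χ (a + d) = χ a) (w : ℕ) (hw : Odd w) (hw0 : 0 < w) (c : ℂ) :
    PowerSeries.rescale c (Tser χ (w * d - 1)) * (expPS ((d : ℂ) * c) + 1)
      = PowerSeries.rescale c (altSum χ d) * (expPS (((w * d : ℕ) : ℂ) * c) + 1) := by
  have h := congrArg (PowerSeries.rescale c) (Tkey χ d hd hd0 hper w hw hw0)
  simpa [map_mul, map_add, rescale_expPS] using h

lemma prod3 {R : Type*} [CommRing R] {A B C eA eB eC X rA rB rC Y : R}
    (h1 : A * eA = X * rA) (h2 : B * eB = rB * Y) (h3 : C * eC = rC * Y) :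
    A * B * C * (eA * (eB * eC)) = X * (rC * (rB * rA)) * Y ^ 2 := by
  calc A * B * C * (eA * (eB * eC)) = (A * eA) * ((B * eB) * (C * eC)) := by ring
    _ = (X * rA) * ((rB * Y) * (rC * Y)) := by rw [h1, h2, h3]
    _ = _ := by ring

lemma coeff_mul3 (A B C : PowerSeries ℂ) (n : ℕ) :
    PowerSeries.coeff n (A * B * C)
      = ∑ k ∈ range (n + 1), ∑ l ∈ range (n + 1 - k),
          PowerSeries.coeff k A *
            (PowerSeries.coeff l B * PowerSeries.coeff (n - k - l) C) := by
  rw [mul_assoc, PowerSeries.coeff_mul, Finset.Nat.sum_antidiagonal_eq_sum_range_succ_mk]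
  apply Finset.sum_congr rfl
  intro k hk
  rw [Finset.mem_range] at hk
  rw [PowerSeries.coeff_mul, Finset.Nat.sum_antidiagonal_eq_sum_range_succ_mk,
    Finset.mul_sum]
  dsimp only
  rw [show (n - k).succ = n + 1 - k by omega]

lemma multinom_cast (k l m : ℕ) :
    (multinom k l m : ℂ) = ((k + l + m).factorial : ℂ) /
      ((k.factorial : ℂ) * (l.factorial : ℂ) * (m.factorial : ℂ)) := by
  have h1 : k.factorial * l.factorial ∣ (k + l).factorial :=
    Nat.factorial_mul_factorial_dvd_factorial_add k l
  have h2 : (k + l).factorial * m.factorial ∣ (k + l + m).factorial :=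
    Nat.factorial_mul_factorial_dvd_factorial_add _ m
  have hdvd : k.factorial * l.factorial * m.factorial ∣ (k + l + m).factorial :=
    dvd_trans (mul_dvd_mul_right h1 _) h2
  rw [multinom, Nat.cast_div hdvd (Nat.cast_ne_zero.mpr (by positivity))]
  push_cast
  ring

/-- The triple-product power series associated to an orientation `(u,v,w)`. -/
noncomputable def Pser (χ : ℤ → ℂ) (E : ℕ → ℂ → ℂ) (d : ℕ) (y1 : ℂ)
    (u v w : ℕ) : PowerSeries ℂ :=
  PowerSeries.rescale ((v * w : ℕ) : ℂ) (Eser E ((u : ℂ) * y1)) *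
    PowerSeries.rescale ((u * w : ℕ) : ℂ) (Tser χ (v * d - 1)) *
    PowerSeries.rescale ((u * v : ℕ) : ℂ) (Tser χ (w * d - 1))

lemma sum_eq_coeff (χ : ℤ → ℂ) (E : ℕ → ℂ → ℂ) (d : ℕ) (y1 : ℂ)
    (u v w n : ℕ) :
    (∑ k ∈ range (n + 1), ∑ l ∈ range (n + 1 - k),
      (multinom k l (n - k - l) : ℂ) * E k ((u : ℂ) * y1) *
        altPowSum χ l (v * d - 1) * altPowSum χ (n - k - l) (w * d - 1) *
        (u : ℂ) ^ (l + (n - k - l)) * (v : ℂ) ^ (k + (n - k - l)) * (w : ℂ) ^ (k + l))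
    = (n.factorial : ℂ) * PowerSeries.coeff n (Pser χ E d y1 u v w) := by
  rw [Pser, coeff_mul3, Finset.mul_sum]
  apply Finset.sum_congr rfl
  intro k hk
  rw [Finset.mul_sum]
  apply Finset.sum_congr rfl
  intro l hl
  rw [Finset.mem_range] at hk hl
  simp only [PowerSeries.coeff_rescale, Eser, Tser, PowerSeries.coeff_mk]
  set m := n - k - l with hm
  have hn : k + l + m = n := by omega
  rw [multinom_cast, hn]
  have hk0 : (k.factorial : ℂ) ≠ 0 := Nat.cast_ne_zero.mpr k.factorial_ne_zero
  have hl0 : (l.factorial : ℂ) ≠ 0 := Nat.cast_ne_zero.mpr l.factorial_ne_zero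
  have hm0 : (m.factorial : ℂ) ≠ 0 := Nat.cast_ne_zero.mpr m.factorial_ne_zero
  field_simp
  push_cast
  ring

lemma Pkey (d : ℕ) (hd : Odd d) (hd0 : 0 < d) (χ : ℤ → ℂ)
    (hper : ∀ a : ℤ, χ (a + d) = χ a) (E : ℕ → ℂ → ℂ) (hE : IsGenEuler d χ E)
    (y1 : ℂ) (u v w : ℕ) (hu : Odd u) (hv : Odd v) (hw : Odd w)
    (hu0 : 0 < u) (hv0 : 0 < v) (hw0 : 0 < w) :
    Pser χ E d y1 u v w *
      ((expPS ((d * (v * w) : ℕ) : ℂ) + 1) * ((expPS ((d * (u * w) : ℕ) : ℂ) + 1) *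
        (expPS ((d * (u * v) : ℕ) : ℂ) + 1)))
    = 2 * expPS (((u * v * w : ℕ) : ℂ) * y1) *
        (PowerSeries.rescale ((u * v : ℕ) : ℂ) (altSum χ d) *
          (PowerSeries.rescale ((u * w : ℕ) : ℂ) (altSum χ d) *
            PowerSeries.rescale ((v * w : ℕ) : ℂ) (altSum χ d))) *
        (expPS ((u * v * w * d : ℕ) : ℂ) + 1) ^ 2 := by
  have h1 := rescale_Eser hE ((u : ℂ) * y1) ((v * w : ℕ) : ℂ)
  have h2 := rescale_Tkey hd hd0 hper v hv hv0 ((u * w : ℕ) : ℂ)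
  have h3 := rescale_Tkey hd hd0 hper w hw hw0 ((u * v : ℕ) : ℂ)
  rw [show ((u : ℂ) * y1) * ((v * w : ℕ) : ℂ) = ((u * v * w : ℕ) : ℂ) * y1 from by
        push_cast; ring,
      show (d : ℂ) * ((v * w : ℕ) : ℂ) = ((d * (v * w) : ℕ) : ℂ) from by push_cast; ring]
    at h1
  rw [show ((v * d : ℕ) : ℂ) * ((u * w : ℕ) : ℂ) = ((u * v * w * d : ℕ) : ℂ) from by
        push_cast; ring,
      show (d : ℂ) * ((u * w : ℕ) : ℂ) = ((d * (u * w) : ℕ) : ℂ) from by push_cast; ring]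
    at h2
  rw [show ((w * d : ℕ) : ℂ) * ((u * v : ℕ) : ℂ) = ((u * v * w * d : ℕ) : ℂ) from by
        push_cast; ring,
      show (d : ℂ) * ((u * v : ℕ) : ℂ) = ((d * (u * v) : ℕ) : ℂ) from by push_cast; ring]
    at h3
  rw [Pser]
  linear_combination prod3 h1 h2 h3

/- ### Main theorem -/

/-- Theorem 4: three cyclic symmetries for the triple sum with one generalized Euler
polynomial factor and two alternating generalized power sum factors. -/
theorem stmt_3 (d : ℕ) (hd : Odd d) (hd0 : 0 < d) (χ : ℤ → ℂ)
    (hper : ∀ a : ℤ, χ (a + d) = χ a)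
    (hmul : ∀ a b : ℤ, χ (a * b) = χ a * χ b) (hone : χ 1 = 1)
    (hvan : ∀ a : ℤ, 1 < Int.gcd a d → χ a = 0)
    (E : ℕ → ℂ → ℂ) (hE : IsGenEuler d χ E)
    (w1 w2 w3 : ℕ) (hw1 : 0 < w1) (hw2 : 0 < w2) (hw3 : 0 < w3)
    (hw1o : Odd w1) (hw2o : Odd w2) (hw3o : Odd w3)
    (y1 : ℂ) (n : ℕ) :
    (∑ k ∈ range (n + 1), ∑ l ∈ range (n + 1 - k),
      (multinom k l (n - k - l) : ℂ) * E k ((w1 : ℂ) * y1) *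
        altPowSum χ l (w2 * d - 1) * altPowSum χ (n - k - l) (w3 * d - 1) *
        (w1 : ℂ) ^ (l + (n - k - l)) * (w2 : ℂ) ^ (k + (n - k - l)) * (w3 : ℂ) ^ (k + l))
    = (∑ k ∈ range (n + 1), ∑ l ∈ range (n + 1 - k),
      (multinom k l (n - k - l) : ℂ) * E k ((w2 : ℂ) * y1) *
        altPowSum χ l (w3 * d - 1) * altPowSum χ (n - k - l) (w1 * d - 1) *
        (w2 : ℂ) ^ (l + (n - k - l)) * (w3 : ℂ) ^ (k + (n - k - l)) * (w1 : ℂ) ^ (k + l))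
    ∧ (∑ k ∈ range (n + 1), ∑ l ∈ range (n + 1 - k),
      (multinom k l (n - k - l) : ℂ) * E k ((w2 : ℂ) * y1) *
        altPowSum χ l (w3 * d - 1) * altPowSum χ (n - k - l) (w1 * d - 1) *
        (w2 : ℂ) ^ (l + (n - k - l)) * (w3 : ℂ) ^ (k + (n - k - l)) * (w1 : ℂ) ^ (k + l))
    = ∑ k ∈ range (n + 1), ∑ l ∈ range (n + 1 - k),
      (multinom k l (n - k - l) : ℂ) * E k ((w3 : ℂ) * y1) *
        altPowSum χ l (w1 * d - 1) * altPowSum χ (n - k - l) (w2 * d - 1) *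
        (w3 : ℂ) ^ (l + (n - k - l)) * (w1 : ℂ) ^ (k + (n - k - l)) * (w2 : ℂ) ^ (k + l) := by
  have hQ : ((expPS ((d * (w2 * w3) : ℕ) : ℂ) + 1) *
      ((expPS ((d * (w1 * w3) : ℕ) : ℂ) + 1) * (expPS ((d * (w1 * w2) : ℕ) : ℂ) + 1)))
      ≠ 0 :=
    mul_ne_zero (expPS_add_one_ne_zero _)
      (mul_ne_zero (expPS_add_one_ne_zero _) (expPS_add_one_ne_zero _))
  have k1 := Pkey d hd hd0 χ hper E hE y1 w1 w2 w3 hw1o hw2o hw3o hw1 hw2 hw3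
  have k2 := Pkey d hd hd0 χ hper E hE y1 w2 w3 w1 hw2o hw3o hw1o hw2 hw3 hw1
  have k3 := Pkey d hd hd0 χ hper E hE y1 w3 w1 w2 hw3o hw1o hw2o hw3 hw1 hw2
  -- normalize the natural-number arguments in k2 and k3
  rw [show w3 * w1 = w1 * w3 by ring, show w2 * w1 = w1 * w2 by ring,
    show w2 * w3 * w1 = w1 * w2 * w3 by ring] at k2
  rw [show w3 * w2 = w2 * w3 by ring, show w3 * w1 = w1 * w3 by ring,
    show w1 * w3 * w2 = w1 * w2 * w3 by ring] at k3
  have e12 : Pser χ E d y1 w1 w2 w3 = Pser χ E d y1 w2 w3 w1 := by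
    apply mul_right_cancel₀ hQ
    linear_combination k1 - k2
  have e23 : Pser χ E d y1 w2 w3 w1 = Pser χ E d y1 w3 w1 w2 := by
    apply mul_right_cancel₀ hQ
    linear_combination k2 - k3
  refine ⟨?_, ?_⟩
  · rw [sum_eq_coeff χ E d y1 w1 w2 w3 n, sum_eq_coeff χ E d y1 w2 w3 w1 n, e12]
  · rw [sum_eq_coeff χ E d y1 w2 w3 w1 n, sum_eq_coeff χ E d y1 w3 w1 w2 n, e23]
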